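/- For any associative algebra A over any unital commutative ring R, T^(3)(A) · T^(3)(A) ⊆ T^(5)(A). -/
import Mathlib


open scoped TensorProduct

/-- Left-normed commutator: `lc a [b₁,...,bₙ] = [a, b₁, ..., bₙ]`. -/
def lc {A : Type*} [Ring A] : A → List A → A
  | a, [] => a
  | a, b :: l => lc ⁅a, b⁆ l

/-- Left-normed commutator of a list; `lcomm [a₁,...,aₙ] = [a₁,...,aₙ]`, `lcomm [] = 0`. -/
def lcomm {A : Type*} [Ring A] : List A → A
  | [] => 0
  | a :: l => lc a l

/-- `Tideal A n` = two-sided ideal of `A` generated by all left-normed commutators of length `n`. -/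
def Tideal (A : Type*) [Ring A] (n : ℕ) : TwoSidedIdeal A :=
  TwoSidedIdeal.span {x | ∃ l : List A, l.length = n ∧ x = lcomm l}

section Aux

variable {A : Type*} [Ring A]

lemma lc_append (a : A) (l : List A) (b : A) : lc a (l ++ [b]) = ⁅lc a l, b⁆ := by
  induction l generalizing a with
  | nil => rfl
  | cons x l ih => simpa [lc] using ih ⁅a, x⁆

lemma lcomm_concat (a : A) (l : List A) (b : A) :
    lcomm ((a :: l) ++ [b]) = ⁅lcomm (a :: l), b⁆ := by
  simp [lcomm, lc_append]

lemma lcomm_mem (n : ℕ) (l : List A) (h : l.length = n) : lcomm l ∈ Tideal A n :=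
  TwoSidedIdeal.subset_span ⟨l, h, rfl⟩

lemma mem5 (p q r s t : A) : ⁅⁅⁅⁅p,q⁆,r⁆,s⁆,t⁆ ∈ Tideal A 5 :=
  lcomm_mem 5 [p,q,r,s,t] rfl

lemma mem5' (l : List A) (h : l.length = 5) : lcomm l ∈ Tideal A 5 := lcomm_mem 5 l h

set_option maxHeartbeats 3200000 in
lemma key6 (a b c d e f : A) : ⁅⁅a,b⁆,c⁆ * ⁅⁅d,e⁆,f⁆ ∈ Tideal A 5 := by
  have h : ⁅⁅a,b⁆,c⁆ * ⁅⁅d,e⁆,f⁆ =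
      ⁅⁅⁅⁅a,b⁆,c⁆,d⁆,f⁆ * e +
      (2 : A) * (f * ⁅⁅⁅⁅a,b⁆,c⁆,e⁆,d⁆) +
      (-2 : A) * (⁅⁅⁅⁅a,b⁆,c⁆,e⁆,d⁆ * f) +
      -(⁅⁅⁅⁅a,b⁆,c⁆,e⁆,f⁆ * d) +
      (2 : A) * (e * ⁅⁅⁅⁅a,b⁆,c⁆,f⁆,d⁆) +
      (-3 : A) * (⁅⁅⁅⁅a,b⁆,c⁆,f⁆,d⁆ * e) +
      ⁅⁅⁅⁅a,b⁆,c⁆,f⁆,e⁆ * d +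
      f * ⁅⁅⁅⁅a,b⁆,d⁆,c⁆,e⁆ +
      (-2 : A) * (⁅⁅⁅⁅a,b⁆,d⁆,c⁆,e⁆ * f) +
      -(e * ⁅⁅⁅⁅a,b⁆,d⁆,c⁆,f⁆) +
      -(⁅⁅⁅⁅a,b⁆,d⁆,c⁆,f⁆ * e) +
      (-2 : A) * (f * ⁅⁅⁅⁅a,b⁆,d⁆,e⁆,c⁆) +
      -(⁅⁅⁅⁅a,b⁆,d⁆,e⁆,f⁆ * c) +
      -(e * ⁅⁅⁅⁅a,b⁆,d⁆,f⁆,c⁆) +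
      (-2 : A) * (⁅⁅⁅⁅a,b⁆,d⁆,f⁆,e⁆ * c) +
      -(f * ⁅⁅⁅⁅a,b⁆,e⁆,c⁆,d⁆) +
      -(d * ⁅⁅⁅⁅a,b⁆,e⁆,c⁆,f⁆) +
      ⁅⁅⁅⁅a,b⁆,e⁆,c⁆,f⁆ * d +
      (-4 : A) * (f * ⁅⁅⁅⁅a,b⁆,e⁆,d⁆,c⁆) +
      (4 : A) * (⁅⁅⁅⁅a,b⁆,e⁆,d⁆,c⁆ * f) +
      -(c * ⁅⁅⁅⁅a,b⁆,e⁆,d⁆,f⁆) +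
      d * ⁅⁅⁅⁅a,b⁆,e⁆,f⁆,c⁆ +
      (-2 : A) * (⁅⁅⁅⁅a,b⁆,e⁆,f⁆,c⁆ * d) +
      (-2 : A) * (e * ⁅⁅⁅⁅a,b⁆,f⁆,c⁆,d⁆) +
      (-2 : A) * (c * ⁅⁅⁅⁅a,b⁆,f⁆,d⁆,e⁆) +
      (-2 : A) * (d * ⁅⁅⁅⁅a,b⁆,f⁆,e⁆,c⁆) +
      (-4 : A) * (⁅⁅⁅⁅a,c⁆,b⁆,e⁆,d⁆ * f) +
      (4 : A) * (⁅⁅⁅⁅a,c⁆,d⁆,b⁆,e⁆ * f) +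
      (4 : A) * (⁅⁅⁅⁅a,c⁆,d⁆,b⁆,f⁆ * e) +
      (4 : A) * (f * ⁅⁅⁅⁅a,c⁆,d⁆,e⁆,b⁆) +
      (-4 : A) * (⁅⁅⁅⁅a,c⁆,d⁆,e⁆,b⁆ * f) +
      (4 : A) * (e * ⁅⁅⁅⁅a,c⁆,d⁆,f⁆,b⁆) +
      (-4 : A) * (⁅⁅⁅⁅a,c⁆,d⁆,f⁆,b⁆ * e) +
      (4 : A) * (⁅⁅⁅⁅a,c⁆,d⁆,f⁆,e⁆ * b) +
      (4 : A) * (⁅⁅⁅⁅a,c⁆,e⁆,b⁆,d⁆ * f) +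
      (-4 : A) * (⁅⁅⁅⁅a,c⁆,f⁆,b⁆,e⁆ * d) +
      (-4 : A) * (e * ⁅⁅⁅⁅a,c⁆,f⁆,d⁆,b⁆) +
      (4 : A) * (⁅⁅⁅⁅a,c⁆,f⁆,d⁆,b⁆ * e) +
      (4 : A) * (b * ⁅⁅⁅⁅a,c⁆,f⁆,d⁆,e⁆) +
      (-4 : A) * (⁅⁅⁅⁅a,c⁆,f⁆,d⁆,e⁆ * b) +
      (4 : A) * (⁅⁅⁅⁅a,c⁆,f⁆,e⁆,b⁆ * d) +
      (-4 : A) * (f * ⁅⁅⁅⁅a,d⁆,b⁆,c⁆,e⁆) +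
      (4 : A) * (⁅⁅⁅⁅a,d⁆,b⁆,c⁆,e⁆ * f) +
      (8 : A) * (f * ⁅⁅⁅⁅a,d⁆,b⁆,e⁆,c⁆) +
      (-8 : A) * (⁅⁅⁅⁅a,d⁆,b⁆,e⁆,c⁆ * f) +
      (-4 : A) * (f * ⁅⁅⁅⁅a,d⁆,e⁆,b⁆,c⁆) +
      (4 : A) * (⁅⁅⁅⁅a,d⁆,e⁆,b⁆,c⁆ * f) +
      (4 : A) * (f * ⁅⁅⁅⁅a,e⁆,b⁆,d⁆,c⁆) +
      (-4 : A) * (⁅⁅⁅⁅a,e⁆,b⁆,d⁆,c⁆ * f) +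
      (-4 : A) * (⁅⁅⁅⁅a,f⁆,b⁆,e⁆,d⁆ * c) +
      (-4 : A) * (d * ⁅⁅⁅⁅a,f⁆,c⁆,b⁆,e⁆) +
      (4 : A) * (⁅⁅⁅⁅a,f⁆,c⁆,b⁆,e⁆ * d) +
      (4 : A) * (e * ⁅⁅⁅⁅a,f⁆,c⁆,d⁆,b⁆) +
      (-4 : A) * (⁅⁅⁅⁅a,f⁆,c⁆,d⁆,b⁆ * e) +
      (-4 : A) * (b * ⁅⁅⁅⁅a,f⁆,c⁆,d⁆,e⁆) +
      (4 : A) * (⁅⁅⁅⁅a,f⁆,c⁆,d⁆,e⁆ * b) +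
      (4 : A) * (d * ⁅⁅⁅⁅a,f⁆,c⁆,e⁆,b⁆) +
      (-4 : A) * (⁅⁅⁅⁅a,f⁆,c⁆,e⁆,b⁆ * d) +
      (4 : A) * (⁅⁅⁅⁅a,f⁆,d⁆,b⁆,e⁆ * c) +
      (-4 : A) * (⁅⁅⁅⁅a,f⁆,d⁆,e⁆,b⁆ * c) +
      (4 : A) * (⁅⁅⁅⁅a,f⁆,e⁆,b⁆,d⁆ * c) +
      (-4 : A) * (a * ⁅⁅⁅⁅b,e⁆,d⁆,c⁆,f⁆) +
      (4 : A) * (⁅⁅⁅⁅(a * b),c⁆,d⁆,e⁆,f⁆) +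
      -(⁅⁅⁅⁅a,b⁆,(c * d)⁆,e⁆,f⁆) +
      (-2 : A) * (⁅⁅⁅⁅a,b⁆,c⁆,(d * e)⁆,f⁆) +
      ⁅⁅⁅⁅a,b⁆,(c * d)⁆,f⁆,e⁆ +
      (-2 : A) * (⁅⁅⁅⁅a,b⁆,c⁆,(d * f)⁆,e⁆) +
      ⁅⁅⁅⁅a,b⁆,(c * e)⁆,d⁆,f⁆ +
      ⁅⁅⁅⁅a,b⁆,(c * e)⁆,f⁆,d⁆ +
      (2 : A) * (⁅⁅⁅⁅a,b⁆,(c * f)⁆,d⁆,e⁆) +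
      (-4 : A) * (⁅⁅⁅⁅(a * b),d⁆,c⁆,e⁆,f⁆) +
      (4 : A) * (⁅⁅⁅⁅a,(b * d)⁆,c⁆,e⁆,f⁆) +
      (2 : A) * (⁅⁅⁅⁅a,b⁆,d⁆,(c * e)⁆,f⁆) +
      ⁅⁅⁅⁅a,b⁆,d⁆,(c * f)⁆,e⁆ +
      (-4 : A) * (⁅⁅⁅⁅a,(b * d)⁆,e⁆,c⁆,f⁆) +
      (4 : A) * (⁅⁅⁅⁅a,b⁆,(d * e)⁆,c⁆,f⁆) +
      ⁅⁅⁅⁅a,b⁆,(d * e)⁆,f⁆,c⁆ +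
      (2 : A) * (⁅⁅⁅⁅a,b⁆,(d * f)⁆,e⁆,c⁆) +
      -(⁅⁅⁅⁅a,b⁆,e⁆,(c * f)⁆,d⁆) +
      (4 : A) * (⁅⁅⁅⁅(a * b),e⁆,d⁆,c⁆,f⁆) +
      (-4 : A) * (⁅⁅⁅⁅a,(b * e)⁆,d⁆,c⁆,f⁆) +
      (2 : A) * (⁅⁅⁅⁅a,b⁆,(e * f)⁆,c⁆,d⁆) +
      (4 : A) * (⁅⁅⁅⁅(a * c),d⁆,b⁆,e⁆,f⁆) +
      (-4 : A) * (⁅⁅⁅⁅a,c⁆,d⁆,(b * e)⁆,f⁆) +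
      (-4 : A) * (⁅⁅⁅⁅a,c⁆,d⁆,(b * f)⁆,e⁆) +
      (4 : A) * (⁅⁅⁅⁅a,c⁆,(d * f)⁆,b⁆,e⁆) +
      (-4 : A) * (⁅⁅⁅⁅a,c⁆,(d * f)⁆,e⁆,b⁆) +
      (4 : A) * (⁅⁅⁅⁅a,(c * f)⁆,b⁆,e⁆,d⁆) +
      (-4 : A) * (⁅⁅⁅⁅a,(c * f)⁆,d⁆,b⁆,e⁆) +
      (4 : A) * (⁅⁅⁅⁅a,(c * f)⁆,d⁆,e⁆,b⁆) +
      (-4 : A) * (⁅⁅⁅⁅a,(c * f)⁆,e⁆,b⁆,d⁆) +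
      (-4 : A) * (⁅⁅⁅⁅a,d⁆,b⁆,(c * e)⁆,f⁆) +
      (4 : A) * (⁅⁅⁅⁅a,d⁆,(b * e)⁆,c⁆,f⁆) := by
    simp only [Ring.lie_def]
    noncomm_ring
  rw [h]
  exact (Tideal A 5).add_mem ((Tideal A 5).add_mem ((Tideal A 5).add_mem ((Tideal A 5).add_mem ((Tideal A 5).add_mem ((Tideal A 5).add_mem ((Tideal A 5).add_mem ((Tideal A 5).add_mem ((Tideal A 5).add_mem ((Tideal A 5).add_mem ((Tideal A 5).add_mem ((Tideal A 5).add_mem ((Tideal A 5).add_mem ((Tideal A 5).add_mem ((Tideal A 5).add_mem ((Tideal A 5).add_mem ((Tideal A 5).add_mem ((Tideal A 5).add_mem ((Tideal A 5).add_mem ((Tideal A 5).add_mem ((Tideal A 5).add_mem ((Tideal A 5).add_mem ((Tideal A 5).add_mem ((Tideal A 5).add_mem ((Tideal A 5).add_mem ((Tideal A 5).add_mem ((Tideal A 5).add_mem ((Tideal A 5).add_mem ((Tideal A 5).add_mem ((Tideal A 5).add_mem ((Tideal A 5).add_mem ((Tideal A 5).add_mem ((Tideal A 5).add_mem ((Tideal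 A 5).add_mem ((Tideal A 5).add_mem ((Tideal A 5).add_mem ((Tideal A 5).add_mem ((Tideal A 5).add_mem ((Tideal A 5).add_mem ((Tideal A 5).add_mem ((Tideal A 5).add_mem ((Tideal A 5).add_mem ((Tideal A 5).add_mem ((Tideal A 5).add_mem ((Tideal A 5).add_mem ((Tideal A 5).add_mem ((Tideal A 5).add_mem ((Tideal A 5).add_mem ((Tideal A 5).add_mem ((Tideal A 5).add_mem ((Tideal A 5).add_mem ((Tideal A 5).add_mem ((Tideal A 5).add_mem ((Tideal A 5).add_mem ((Tideal A 5).add_mem ((Tideal A 5).add_mem ((Tideal A 5).add_mem ((Tideal A 5).add_mem ((Tideal A 5).add_mem ((Tideal A 5).add_mem ((Tideal A 5).add_mem ((Tideal A 5).add_mem ((Tideal A 5).add_mem ((Tideal A 5).add_mem ((Tideal A 5).add_mem ((Tideal A 5).add_mem ((Tideal A 5).add_mem ((Tideal A 5).add_mem ((Tideal A 5).add_mem ((Tideal A 5).add_mem ((Tideal A 5).add_mem ((Tideal A 5).add_mem ((Tideal A 5).add_mem ((Tideal A 5).add_mem ((Tideal A 5).add_mem ((Tideal A 5).add_mem ((Tideal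 A 5).add_mem ((Tideal A 5).add_mem ((Tideal A 5).add_mem ((Tideal A 5).add_mem ((Tideal A 5).add_mem ((Tideal A 5).add_mem ((Tideal A 5).add_mem ((Tideal A 5).add_mem ((Tideal A 5).add_mem ((Tideal A 5).add_mem ((Tideal A 5).add_mem ((Tideal A 5).add_mem ((Tideal A 5).add_mem ((Tideal A 5).add_mem ((Tideal A 5).add_mem ((Tideal A 5).add_mem ((Tideal A 5).mul_mem_right _ _ (mem5 _ _ _ _ _))
    ((Tideal A 5).mul_mem_left _ _ ((Tideal A 5).mul_mem_left _ _ (mem5 _ _ _ _ _))))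
    ((Tideal A 5).mul_mem_left _ _ ((Tideal A 5).mul_mem_right _ _ (mem5 _ _ _ _ _))))
    ((Tideal A 5).neg_mem ((Tideal A 5).mul_mem_right _ _ (mem5 _ _ _ _ _))))
    ((Tideal A 5).mul_mem_left _ _ ((Tideal A 5).mul_mem_left _ _ (mem5 _ _ _ _ _))))
    ((Tideal A 5).mul_mem_left _ _ ((Tideal A 5).mul_mem_right _ _ (mem5 _ _ _ _ _))))
    ((Tideal A 5).mul_mem_right _ _ (mem5 _ _ _ _ _)))
    ((Tideal A 5).mul_mem_left _ _ (mem5 _ _ _ _ _)))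
    ((Tideal A 5).mul_mem_left _ _ ((Tideal A 5).mul_mem_right _ _ (mem5 _ _ _ _ _))))
    ((Tideal A 5).neg_mem ((Tideal A 5).mul_mem_left _ _ (mem5 _ _ _ _ _))))
    ((Tideal A 5).neg_mem ((Tideal A 5).mul_mem_right _ _ (mem5 _ _ _ _ _))))
    ((Tideal A 5).mul_mem_left _ _ ((Tideal A 5).mul_mem_left _ _ (mem5 _ _ _ _ _))))
    ((Tideal A 5).neg_mem ((Tideal A 5).mul_mem_right _ _ (mem5 _ _ _ _ _))))
    ((Tideal A 5).neg_mem ((Tideal A 5).mul_mem_left _ _ (mem5 _ _ _ _ _))))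
    ((Tideal A 5).mul_mem_left _ _ ((Tideal A 5).mul_mem_right _ _ (mem5 _ _ _ _ _))))
    ((Tideal A 5).neg_mem ((Tideal A 5).mul_mem_left _ _ (mem5 _ _ _ _ _))))
    ((Tideal A 5).neg_mem ((Tideal A 5).mul_mem_left _ _ (mem5 _ _ _ _ _))))
    ((Tideal A 5).mul_mem_right _ _ (mem5 _ _ _ _ _)))
    ((Tideal A 5).mul_mem_left _ _ ((Tideal A 5).mul_mem_left _ _ (mem5 _ _ _ _ _))))
    ((Tideal A 5).mul_mem_left _ _ ((Tideal A 5).mul_mem_right _ _ (mem5 _ _ _ _ _))))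
    ((Tideal A 5).neg_mem ((Tideal A 5).mul_mem_left _ _ (mem5 _ _ _ _ _))))
    ((Tideal A 5).mul_mem_left _ _ (mem5 _ _ _ _ _)))
    ((Tideal A 5).mul_mem_left _ _ ((Tideal A 5).mul_mem_right _ _ (mem5 _ _ _ _ _))))
    ((Tideal A 5).mul_mem_left _ _ ((Tideal A 5).mul_mem_left _ _ (mem5 _ _ _ _ _))))
    ((Tideal A 5).mul_mem_left _ _ ((Tideal A 5).mul_mem_left _ _ (mem5 _ _ _ _ _))))
    ((Tideal A 5).mul_mem_left _ _ ((Tideal A 5).mul_mem_left _ _ (mem5 _ _ _ _ _))))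
    ((Tideal A 5).mul_mem_left _ _ ((Tideal A 5).mul_mem_right _ _ (mem5 _ _ _ _ _))))
    ((Tideal A 5).mul_mem_left _ _ ((Tideal A 5).mul_mem_right _ _ (mem5 _ _ _ _ _))))
    ((Tideal A 5).mul_mem_left _ _ ((Tideal A 5).mul_mem_right _ _ (mem5 _ _ _ _ _))))
    ((Tideal A 5).mul_mem_left _ _ ((Tideal A 5).mul_mem_left _ _ (mem5 _ _ _ _ _))))
    ((Tideal A 5).mul_mem_left _ _ ((Tideal A 5).mul_mem_right _ _ (mem5 _ _ _ _ _))))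
    ((Tideal A 5).mul_mem_left _ _ ((Tideal A 5).mul_mem_left _ _ (mem5 _ _ _ _ _))))
    ((Tideal A 5).mul_mem_left _ _ ((Tideal A 5).mul_mem_right _ _ (mem5 _ _ _ _ _))))
    ((Tideal A 5).mul_mem_left _ _ ((Tideal A 5).mul_mem_right _ _ (mem5 _ _ _ _ _))))
    ((Tideal A 5).mul_mem_left _ _ ((Tideal A 5).mul_mem_right _ _ (mem5 _ _ _ _ _))))
    ((Tideal A 5).mul_mem_left _ _ ((Tideal A 5).mul_mem_right _ _ (mem5 _ _ _ _ _))))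
    ((Tideal A 5).mul_mem_left _ _ ((Tideal A 5).mul_mem_left _ _ (mem5 _ _ _ _ _))))
    ((Tideal A 5).mul_mem_left _ _ ((Tideal A 5).mul_mem_right _ _ (mem5 _ _ _ _ _))))
    ((Tideal A 5).mul_mem_left _ _ ((Tideal A 5).mul_mem_left _ _ (mem5 _ _ _ _ _))))
    ((Tideal A 5).mul_mem_left _ _ ((Tideal A 5).mul_mem_right _ _ (mem5 _ _ _ _ _))))
    ((Tideal A 5).mul_mem_left _ _ ((Tideal A 5).mul_mem_right _ _ (mem5 _ _ _ _ _))))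
    ((Tideal A 5).mul_mem_left _ _ ((Tideal A 5).mul_mem_left _ _ (mem5 _ _ _ _ _))))
    ((Tideal A 5).mul_mem_left _ _ ((Tideal A 5).mul_mem_right _ _ (mem5 _ _ _ _ _))))
    ((Tideal A 5).mul_mem_left _ _ ((Tideal A 5).mul_mem_left _ _ (mem5 _ _ _ _ _))))
    ((Tideal A 5).mul_mem_left _ _ ((Tideal A 5).mul_mem_right _ _ (mem5 _ _ _ _ _))))
    ((Tideal A 5).mul_mem_left _ _ ((Tideal A 5).mul_mem_left _ _ (mem5 _ _ _ _ _))))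
    ((Tideal A 5).mul_mem_left _ _ ((Tideal A 5).mul_mem_right _ _ (mem5 _ _ _ _ _))))
    ((Tideal A 5).mul_mem_left _ _ ((Tideal A 5).mul_mem_left _ _ (mem5 _ _ _ _ _))))
    ((Tideal A 5).mul_mem_left _ _ ((Tideal A 5).mul_mem_right _ _ (mem5 _ _ _ _ _))))
    ((Tideal A 5).mul_mem_left _ _ ((Tideal A 5).mul_mem_right _ _ (mem5 _ _ _ _ _))))
    ((Tideal A 5).mul_mem_left _ _ ((Tideal A 5).mul_mem_left _ _ (mem5 _ _ _ _ _))))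
    ((Tideal A 5).mul_mem_left _ _ ((Tideal A 5).mul_mem_right _ _ (mem5 _ _ _ _ _))))
    ((Tideal A 5).mul_mem_left _ _ ((Tideal A 5).mul_mem_left _ _ (mem5 _ _ _ _ _))))
    ((Tideal A 5).mul_mem_left _ _ ((Tideal A 5).mul_mem_right _ _ (mem5 _ _ _ _ _))))
    ((Tideal A 5).mul_mem_left _ _ ((Tideal A 5).mul_mem_left _ _ (mem5 _ _ _ _ _))))
    ((Tideal A 5).mul_mem_left _ _ ((Tideal A 5).mul_mem_right _ _ (mem5 _ _ _ _ _))))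
    ((Tideal A 5).mul_mem_left _ _ ((Tideal A 5).mul_mem_left _ _ (mem5 _ _ _ _ _))))
    ((Tideal A 5).mul_mem_left _ _ ((Tideal A 5).mul_mem_right _ _ (mem5 _ _ _ _ _))))
    ((Tideal A 5).mul_mem_left _ _ ((Tideal A 5).mul_mem_right _ _ (mem5 _ _ _ _ _))))
    ((Tideal A 5).mul_mem_left _ _ ((Tideal A 5).mul_mem_right _ _ (mem5 _ _ _ _ _))))
    ((Tideal A 5).mul_mem_left _ _ ((Tideal A 5).mul_mem_right _ _ (mem5 _ _ _ _ _))))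
    ((Tideal A 5).mul_mem_left _ _ ((Tideal A 5).mul_mem_left _ _ (mem5 _ _ _ _ _))))
    ((Tideal A 5).mul_mem_left _ _ (mem5 _ _ _ _ _)))
    ((Tideal A 5).neg_mem (mem5 _ _ _ _ _)))
    ((Tideal A 5).mul_mem_left _ _ (mem5 _ _ _ _ _)))
    (mem5 _ _ _ _ _))
    ((Tideal A 5).mul_mem_left _ _ (mem5 _ _ _ _ _)))
    (mem5 _ _ _ _ _))
    (mem5 _ _ _ _ _))
    ((Tideal A 5).mul_mem_left _ _ (mem5 _ _ _ _ _)))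
    ((Tideal A 5).mul_mem_left _ _ (mem5 _ _ _ _ _)))
    ((Tideal A 5).mul_mem_left _ _ (mem5 _ _ _ _ _)))
    ((Tideal A 5).mul_mem_left _ _ (mem5 _ _ _ _ _)))
    (mem5 _ _ _ _ _))
    ((Tideal A 5).mul_mem_left _ _ (mem5 _ _ _ _ _)))
    ((Tideal A 5).mul_mem_left _ _ (mem5 _ _ _ _ _)))
    (mem5 _ _ _ _ _))
    ((Tideal A 5).mul_mem_left _ _ (mem5 _ _ _ _ _)))
    ((Tideal A 5).neg_mem (mem5 _ _ _ _ _)))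
    ((Tideal A 5).mul_mem_left _ _ (mem5 _ _ _ _ _)))
    ((Tideal A 5).mul_mem_left _ _ (mem5 _ _ _ _ _)))
    ((Tideal A 5).mul_mem_left _ _ (mem5 _ _ _ _ _)))
    ((Tideal A 5).mul_mem_left _ _ (mem5 _ _ _ _ _)))
    ((Tideal A 5).mul_mem_left _ _ (mem5 _ _ _ _ _)))
    ((Tideal A 5).mul_mem_left _ _ (mem5 _ _ _ _ _)))
    ((Tideal A 5).mul_mem_left _ _ (mem5 _ _ _ _ _)))
    ((Tideal A 5).mul_mem_left _ _ (mem5 _ _ _ _ _)))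
    ((Tideal A 5).mul_mem_left _ _ (mem5 _ _ _ _ _)))
    ((Tideal A 5).mul_mem_left _ _ (mem5 _ _ _ _ _)))
    ((Tideal A 5).mul_mem_left _ _ (mem5 _ _ _ _ _)))
    ((Tideal A 5).mul_mem_left _ _ (mem5 _ _ _ _ _)))
    ((Tideal A 5).mul_mem_left _ _ (mem5 _ _ _ _ _)))
    ((Tideal A 5).mul_mem_left _ _ (mem5 _ _ _ _ _))

lemma claim4 (l : List A) (h : l.length = 4) (y : A) (hy : y ∈ Tideal A 3) :
    lcomm l * y ∈ Tideal A 5 := by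
  set T5 := Tideal A 5
  set g := lcomm l with hg
  let I : TwoSidedIdeal A := TwoSidedIdeal.mk' {y | g * y ∈ T5}
    (by simp)
    (fun {y z} h1 h2 => by simpa [mul_add] using T5.add_mem h1 h2)
    (fun {y} h1 => by simpa [mul_neg] using T5.neg_mem h1)
    (fun {a y} h1 => by
      have h2 : lcomm (l ++ [a]) ∈ T5 := lcomm_mem 5 _ (by simp [h])
      have h3 : g * (a * y) = a * (g * y) + (lcomm (l ++ [a])) * y := by
        obtain ⟨p, l', rfl⟩ : ∃ p l', l = p :: l' := by
          cases l with
          | nil => simp at h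
          | cons p l' => exact ⟨p, l', rfl⟩
        rw [lcomm_concat, Ring.lie_def]
        noncomm_ring
      rw [Set.mem_setOf_eq, h3]
      exact T5.add_mem (T5.mul_mem_left _ _ h1) (T5.mul_mem_right _ _ h2))
    (fun {y a} h1 => by
      rw [Set.mem_setOf_eq, ← mul_assoc]
      exact T5.mul_mem_right _ _ h1)
  have hsub : {x : A | ∃ m : List A, m.length = 3 ∧ x = lcomm m} ⊆ I := by
    rintro x ⟨m, hm, rfl⟩
    obtain ⟨d, e, f, rfl⟩ : ∃ d e f, m = [d, e, f] := by
      match m, hm with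
      | [d, e, f], _ => exact ⟨d, e, f, rfl⟩
    obtain ⟨p, q, r, s, rfl⟩ : ∃ p q r s, l = [p, q, r, s] := by
      match l, h with
      | [p, q, r, s], _ => exact ⟨p, q, r, s, rfl⟩
    refine (TwoSidedIdeal.mem_mk' _ _ _ _ _ _ _).mpr ?_
    show g * lcomm [d,e,f] ∈ T5
    exact key6 ⁅p,q⁆ r s d e f
  have hyI := TwoSidedIdeal.mem_span_iff.mp hy I hsub
  simpa [I, TwoSidedIdeal.mem_mk'] using hyI

lemma claim3 (l : List A) (h : l.length = 3) (y : A) (hy : y ∈ Tideal A 3) :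
    lcomm l * y ∈ Tideal A 5 := by
  set T5 := Tideal A 5
  set g := lcomm l with hg
  let I : TwoSidedIdeal A := TwoSidedIdeal.mk'
      {y | y ∈ Tideal A 3 ∧ g * y ∈ T5}
    (by simp)
    (fun {y z} h1 h2 => ⟨(Tideal A 3).add_mem h1.1 h2.1, by
      simpa [mul_add] using T5.add_mem h1.2 h2.2⟩)
    (fun {y} h1 => ⟨(Tideal A 3).neg_mem h1.1, by
      simpa [mul_neg] using T5.neg_mem h1.2⟩)
    (fun {a y} h1 => by
      refine ⟨(Tideal A 3).mul_mem_left _ _ h1.1, ?_⟩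
      have h2 : lcomm (l ++ [a]) * y ∈ T5 := claim4 _ (by simp [h]) y h1.1
      have h3 : g * (a * y) = a * (g * y) + (lcomm (l ++ [a])) * y := by
        obtain ⟨p, l', rfl⟩ : ∃ p l', l = p :: l' := by
          cases l with
          | nil => simp at h
          | cons p l' => exact ⟨p, l', rfl⟩
        rw [lcomm_concat, Ring.lie_def]
        noncomm_ring
      rw [h3]
      exact T5.add_mem (T5.mul_mem_left _ _ h1.2) h2)
    (fun {y a} h1 => ⟨(Tideal A 3).mul_mem_right _ _ h1.1, by
      rw [← mul_assoc]
      exact T5.mul_mem_right _ _ h1.2⟩)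
  have hsub : {x : A | ∃ m : List A, m.length = 3 ∧ x = lcomm m} ⊆ I := by
    rintro x ⟨m, hm, rfl⟩
    refine (TwoSidedIdeal.mem_mk' _ _ _ _ _ _ _).mpr ⟨lcomm_mem 3 m hm, ?_⟩
    obtain ⟨d, e, f, rfl⟩ : ∃ d e f, m = [d, e, f] := by
      match m, hm with
      | [d, e, f], _ => exact ⟨d, e, f, rfl⟩
    obtain ⟨p, q, r, rfl⟩ : ∃ p q r, l = [p, q, r] := by
      match l, h with
      | [p, q, r], _ => exact ⟨p, q, r, rfl⟩
    show g * lcomm [d,e,f] ∈ T5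
    exact key6 p q r d e f
  have hyI := TwoSidedIdeal.mem_span_iff.mp hy I hsub
  exact ((TwoSidedIdeal.mem_mk' _ _ _ _ _ _ _).mp hyI).2

end Aux

/-- `T⁽³⁾(A) T⁽³⁾(A) ⊆ T⁽⁵⁾(A)` over an arbitrary commutative unital ring. -/
theorem statement_19 (R : Type*) [CommRing R] (A : Type*) [Ring A] [Algebra R A]
    (x y : A) (hx : x ∈ Tideal A 3) (hy : y ∈ Tideal A 3) :
    x * y ∈ Tideal A 5 := by
  set T5 := Tideal A 5
  let J : TwoSidedIdeal A := TwoSidedIdeal.mk'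
      {x | ∀ y ∈ Tideal A 3, x * y ∈ T5}
    (fun y _ => by simp)
    (fun {x z} h1 h2 y hy => by simpa [add_mul] using T5.add_mem (h1 y hy) (h2 y hy))
    (fun {x} h1 y hy => by simpa [neg_mul] using T5.neg_mem (h1 y hy))
    (fun {a x} h1 y hy => by
      rw [mul_assoc]
      exact T5.mul_mem_left _ _ (h1 y hy))
    (fun {x a} h1 y hy => by
      rw [mul_assoc]
      exact h1 (a * y) ((Tideal A 3).mul_mem_left _ _ hy))
  have hsub : {x : A | ∃ m : List A, m.length = 3 ∧ x = lcomm m} ⊆ J := by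
    rintro x ⟨m, hm, rfl⟩
    exact (TwoSidedIdeal.mem_mk' _ _ _ _ _ _ _).mpr (fun y hy => claim3 m hm y hy)
  have hxJ := TwoSidedIdeal.mem_span_iff.mp hx J hsub
  exact ((TwoSidedIdeal.mem_mk' _ _ _ _ _ _ _).mp hxJ) y hy
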